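/- Let X be a real Banach space, let f : X → ℝ be quasiconvex and densely continuous, and let m ∈ ℝ be the topological essential infimum of f. Let x ∈ X be a point with f(x) > m at which f is continuous. Then x does not belong to the closure of F'_m = {y ∈ X : f(y) ≤ m}, and there exist an open neighborhood U of x contained in X \ closure(F'_m) and a closed convex cone K ⊆ X with nonempty interior such that f is K-nondecreasing on U. -/

import Mathlib

open Filter Topology Set MeasureTheory

/-- `f` is quasiconvex: `f (l•x + (1-l)•y) ≤ max (f x) (f y)` for `l ∈ [0,1]`. -/
def QuasiconvexFun {X : Type*} [AddCommGroup X] [Module ℝ X] (f : X → ℝ) : Prop :=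
  ∀ x y : X, ∀ l : ℝ, l ∈ Set.Icc (0 : ℝ) 1 →
    f (l • x + (1 - l) • y) ≤ max (f x) (f y)

/-- `f` is strictly quasiconvex. -/
def StrictlyQuasiconvexFun {X : Type*} [AddCommGroup X] [Module ℝ X] (f : X → ℝ) : Prop :=
  ∀ x y : X, x ≠ y → ∀ l : ℝ, l ∈ Set.Ioo (0 : ℝ) 1 →
    f (l • x + (1 - l) • y) < max (f x) (f y)

/-- `f` is densely continuous: its set of points of continuity is dense. -/
def DenselyContinuous {X : Type*} [TopologicalSpace X] (f : X → ℝ) : Prop :=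
  Dense {x : X | ContinuousAt f x}

/-- `m` is the topological essential infimum of `f`: the strict sublevel set `{f < α}`
is meager for `α < m` and nonmeager for `α > m`. -/
def IsTopEssInf {X : Type*} [TopologicalSpace X] (f : X → ℝ) (m : ℝ) : Prop :=
  (∀ α : ℝ, α < m → IsMeagre {x : X | f x < α}) ∧
  (∀ α : ℝ, m < α → ¬ IsMeagre {x : X | f x < α})

/-- Aronszajn null set: a Borel set `N` such that for every sequence `ξ` with dense linear
span, `N` decomposes as a countable union of Borel sets, the `n`-th of which has Lebesgue
null intersection with every line of direction `ξ n`. -/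
def AronszajnNull {X : Type*} [NormedAddCommGroup X] [NormedSpace ℝ X]
    [MeasurableSpace X] (N : Set X) : Prop :=
  MeasurableSet N ∧
  ∀ ξ : ℕ → X, Dense (Submodule.span ℝ (Set.range ξ) : Set X) →
    ∃ Nn : ℕ → Set X, N = ⋃ n, Nn n ∧
      ∀ n, MeasurableSet (Nn n) ∧
        ∀ x : X, MeasureTheory.volume {t : ℝ | x + t • ξ n ∈ Nn n} = 0

/-- Haar null set: `E` is contained in a Borel set `B` for which there is a Borel
probability measure vanishing on all translates of `B`. -/
def HaarNull {X : Type*} [AddCommGroup X] [TopologicalSpace X]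
    [MeasurableSpace X] (E : Set X) : Prop :=
  ∃ B : Set X, E ⊆ B ∧ MeasurableSet B ∧
    ∃ μ : MeasureTheory.Measure X, MeasureTheory.IsProbabilityMeasure μ ∧
      ∀ x : X, μ ((fun y => x + y) '' B) = 0

/-- Hadamard differentiability of `f` at `x`. -/
def HadamardDiffAt {X : Type*} [NormedAddCommGroup X] [NormedSpace ℝ X]
    (f : X → ℝ) (x : X) : Prop :=
  ∃ L : X →L[ℝ] ℝ, ∀ h : X, ∀ t : ℕ → ℝ, (∀ n, t n ≠ 0) →
    Tendsto t atTop (𝓝 0) → ∀ hs : ℕ → X, Tendsto hs atTop (𝓝 h) →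
      Tendsto (fun n => (f (x + t n • hs n) - f x) / t n) atTop (𝓝 (L h))

/-- Hadamard differentiability at `x` of a function whose relevant values are those on `V`. -/
def HadamardDiffWithinAt {X : Type*} [NormedAddCommGroup X] [NormedSpace ℝ X]
    (f : X → ℝ) (V : Set X) (x : X) : Prop :=
  ∃ L : X →L[ℝ] ℝ, ∀ h : X, ∀ t : ℕ → ℝ, (∀ n, t n ≠ 0) →
    Tendsto t atTop (𝓝 0) → ∀ hs : ℕ → X, Tendsto hs atTop (𝓝 h) →
      (∀ n, x + t n • hs n ∈ V) →
      Tendsto (fun n => (f (x + t n • hs n) - f x) / t n) atTop (𝓝 (L h))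

/-- Gâteaux differentiability of `f` at `x` with derivative `L`. -/
def GateauxDiffAt {X : Type*} [NormedAddCommGroup X] [NormedSpace ℝ X]
    (f : X → ℝ) (x : X) (L : X →L[ℝ] ℝ) : Prop :=
  ∀ h : X, Tendsto (fun t : ℝ => (f (x + t • h) - f x) / t) (𝓝[≠] 0) (𝓝 (L h))

/-- Essential Gâteaux differentiability of `f` at `x`: directional derivatives exist and
are given by a continuous linear functional for a comeager (residual) set of directions
in the unit sphere. -/
def EssGateauxDiffAt {X : Type*} [NormedAddCommGroup X] [NormedSpace ℝ X]
    (f : X → ℝ) (x : X) : Prop :=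
  ∃ L : X →L[ℝ] ℝ, ∃ Ω : Set (Metric.sphere (0 : X) 1), IsMeagre Ωᶜ ∧
    ∀ h ∈ Ω, Tendsto (fun t : ℝ => (f (x + t • (h : X)) - f x) / t) (𝓝[≠] 0) (𝓝 (L (h : X)))

/-- `K` is a closed convex cone. -/
def IsClosedConvexCone {X : Type*} [NormedAddCommGroup X] [NormedSpace ℝ X] (K : Set X) : Prop :=
  IsClosed K ∧ Convex ℝ K ∧ ∀ l : ℝ, 0 ≤ l → ∀ k ∈ K, l • k ∈ K

/-- `f` is `K`-nondecreasing on `U`. -/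
def KNondecreasingOn {X : Type*} [AddCommGroup X] [Module ℝ X]
    (f : X → ℝ) (K U : Set X) : Prop :=
  ∀ u ∈ U, ∀ k ∈ K, k ≠ 0 → u + k ∈ U → f u ≤ f (u + k)

/-- Ideally convex subset: stable under infinite convex combinations of bounded sequences. -/
def IdeallyConvex {X : Type*} [NormedAddCommGroup X] [NormedSpace ℝ X] (C : Set X) : Prop :=
  ∀ (x : ℕ → X) (lam : ℕ → ℝ), (∀ n, x n ∈ C) → Bornology.IsBounded (Set.range x) →
    (∀ n, lam n ∈ Set.Icc (0 : ℝ) 1) → HasSum lam 1 →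
      ∑' n, lam n • x n ∈ C

/-- `C‡`: the union, over finite dimensional subspaces `Z ⊆ X`, of the closures of `C ∩ Z`. -/
def Ddag {X : Type*} [NormedAddCommGroup X] [NormedSpace ℝ X] (C : Set X) : Set X :=
  ⋃ (Z : Submodule ℝ X) (_ : FiniteDimensional ℝ Z), closure (C ∩ (Z : Set X))

/-- A normed space is reflexive if the canonical inclusion into its double dual is onto. -/
def IsReflexiveSpace (X : Type*) [NormedAddCommGroup X] [NormedSpace ℝ X] : Prop :=
  Function.Surjective (NormedSpace.inclusionInDoubleDual ℝ X)

lemma myNowhereDense_isMeagre {X : Type*} [TopologicalSpace X] {s : Set X}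
    (h : IsNowhereDense s) : IsMeagre s := by
  rw [isMeagre_iff_countable_union_isNowhereDense]
  exact ⟨{s}, by simpa using h, countable_singleton s, by simp⟩

lemma nonmeagre_interior_closure {X : Type*} [TopologicalSpace X] {s : Set X}
    (h : ¬ IsMeagre s) : (interior (closure s)).Nonempty := by
  rw [Set.nonempty_iff_ne_empty]
  intro he
  exact h (myNowhereDense_isMeagre he)

set_option maxHeartbeats 1000000 in
/-- At a point of continuity `x` with `f x > m`, the point lies outside the closure of
`{f ≤ m}` and `f` is `K`-nondecreasing near `x` for some closed convex cone `K` with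
nonempty interior. -/
theorem stmt_8 {X : Type*} [NormedAddCommGroup X] [NormedSpace ℝ X] [CompleteSpace X]
    (f : X → ℝ) (hq : QuasiconvexFun f) (hd : DenselyContinuous f)
    (m : ℝ) (hm : IsTopEssInf f m)
    (x : X) (hx : m < f x) (hc : ContinuousAt f x) :
    x ∉ closure {y : X | f y ≤ m} ∧
    ∃ U : Set X, IsOpen U ∧ x ∈ U ∧ U ⊆ (closure {y : X | f y ≤ m})ᶜ ∧
      ∃ K : Set X, IsClosedConvexCone K ∧ (interior K).Nonempty ∧
        KNondecreasingOn f K U := by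
  obtain ⟨hmeager, hnonmeager⟩ := hm
  set β : ℝ := (m + f x) / 2 with hβdef
  set γ : ℝ := (β + f x) / 2 with hγdef
  have hmβ : m < β := by rw [hβdef]; linarith
  have hβγ : β < γ := by rw [hγdef]; linarith
  have hγx : γ < f x := by rw [hγdef]; linarith
  have hmγ : m < γ := hmβ.trans hβγ
  -- a ball around x on which f > γ
  obtain ⟨r0, hr0pos, hr0⟩ := Metric.mem_nhds_iff.mp (hc (Ioi_mem_nhds hγx))
  -- the sublevel set {f < β} is nonmeagre, so its closure has nonempty interior
  obtain ⟨c, hcmem⟩ := nonmeagre_interior_closure (hnonmeager β hmβ)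
  obtain ⟨ρ', hρ'pos, hρ'⟩ := Metric.mem_nhds_iff.mp (mem_interior_iff_mem_nhds.mp hcmem)
  -- a continuity point z inside that ball
  obtain ⟨z, hzc, hzball⟩ := hd.exists_mem_open Metric.isOpen_ball
    ⟨c, Metric.mem_ball_self hρ'pos⟩
  have hzcl : z ∈ closure {y : X | f y < β} := hρ' hzball
  have hfz : f z ≤ β := by
    by_contra h
    push_neg at h
    obtain ⟨u, hu1, hu2⟩ := mem_closure_iff_nhds.mp hzcl _ (hzc (Ioi_mem_nhds h))
    have h1 : β < f u := hu1
    have h2 : f u < β := hu2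
    linarith
  have hfzγ : f z < γ := lt_of_le_of_lt hfz hβγ
  obtain ⟨ρ2, hρ2pos, hρ2⟩ := Metric.mem_nhds_iff.mp (hzc (Iio_mem_nhds hfzγ))
  set ρ : ℝ := ρ2 / 2 with hρdef
  have hρpos : 0 < ρ := by rw [hρdef]; linarith
  set r : ℝ := min r0 ρ / 2 with hrdef
  have hrpos : 0 < r := by rw [hrdef]; positivity
  have hr_r0 : r ≤ r0 := by
    rw [hrdef]
    have := min_le_left r0 ρ
    linarith
  have hr_ρ : r ≤ ρ / 2 := by
    rw [hrdef]
    have := min_le_right r0 ρ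
    linarith
  -- distance between x and z
  have hxz : ρ2 ≤ ‖x - z‖ := by
    by_contra h
    push_neg at h
    have hxm : x ∈ Metric.ball z ρ2 := by rw [Metric.mem_ball, dist_eq_norm]; exact h
    have : f x < γ := hρ2 hxm
    linarith
  set C : Set X := Metric.closedBall (x - z) ρ with hCdef
  set K : Set X := {k : X | ∃ t : ℝ, 0 ≤ t ∧ ∃ w ∈ C, k = t • w} with hKdef
  set U : Set X := Metric.ball x r with hUdef
  have hCmem : ∀ w ∈ C, ‖w - (x - z)‖ ≤ ρ := by
    intro w hw
    rw [hCdef, Metric.mem_closedBall, dist_eq_norm] at hw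
    exact hw
  have hCnormlow : ∀ w ∈ C, ρ ≤ ‖w‖ := by
    intro w hw
    have h1 := hCmem w hw
    have h2 : ‖x - z‖ - ‖w - (x - z)‖ ≤ ‖w‖ := by
      have := norm_sub_norm_le (x - z) (x - z - w)
      have he : x - z - (x - z - w) = w := by abel
      rw [he] at this
      have : ‖x - z‖ - ‖x - z - w‖ ≤ ‖w‖ := this
      have hsym : ‖x - z - w‖ = ‖w - (x - z)‖ := by rw [norm_sub_rev]
      linarith
    have : 2 * ρ ≤ ‖x - z‖ := by rw [hρdef]; linarith
    linarith
  have hCnormhigh : ∀ w ∈ C, ‖w‖ ≤ ‖x - z‖ + ρ := by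
    intro w hw
    have h1 := hCmem w hw
    calc ‖w‖ = ‖(x - z) + (w - (x - z))‖ := by rw [add_sub_cancel]
      _ ≤ ‖x - z‖ + ‖w - (x - z)‖ := norm_add_le _ _
      _ ≤ ‖x - z‖ + ρ := by linarith
  -- points of the big ball are outside closure {f ≤ m}
  have hUout : ∀ u ∈ Metric.ball x r0, u ∉ closure {y : X | f y ≤ m} := by
    intro u hu hcl
    obtain ⟨v, hv1, hv2⟩ := mem_closure_iff_nhds.mp hcl _
      (Metric.isOpen_ball.mem_nhds hu)
    have h1 : γ < f v := hr0 hv1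
    have h2 : f v ≤ m := hv2
    linarith
  refine ⟨hUout x (Metric.mem_ball_self hr0pos), U, Metric.isOpen_ball,
    Metric.mem_ball_self hrpos, ?_, K, ⟨?_, ?_, ?_⟩, ?_, ?_⟩
  · -- U ⊆ (closure {f ≤ m})ᶜ
    intro u hu
    exact hUout u (Metric.ball_subset_ball hr_r0 hu)
  · -- K closed
    apply IsSeqClosed.isClosed
    intro k y hk hlim
    choose t ht w hw hkw using hk
    have hwC : ∀ n, w n ∈ C := hw
    have hkweq : ∀ n, k n = t n • w n := hkw
    obtain ⟨M, hM⟩ : ∃ M : ℝ, ∀ n, ‖k n‖ ≤ M := by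
      obtain ⟨M, hM⟩ := (hlim.norm).bddAbove_range
      exact ⟨M, fun n => hM ⟨n, rfl⟩⟩
    have htM : ∀ n, t n ≤ M / ρ := by
      intro n
      have h1 : t n * ρ ≤ t n * ‖w n‖ :=
        mul_le_mul_of_nonneg_left (hCnormlow _ (hwC n)) (ht n)
      have h2 : t n * ‖w n‖ = ‖k n‖ := by
        rw [hkweq n, norm_smul, Real.norm_eq_abs, abs_of_nonneg (ht n)]
      rw [le_div_iff₀ hρpos]
      calc t n * ρ ≤ ‖k n‖ := by rw [← h2]; exact h1
        _ ≤ M := hM n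
    have htIcc : ∀ n, t n ∈ Set.Icc (0 : ℝ) (M / ρ) := fun n => ⟨ht n, htM n⟩
    obtain ⟨tinf, htinfmem, φ, hφ, hφlim⟩ := isCompact_Icc.tendsto_subseq htIcc
    rcases eq_or_lt_of_le htinfmem.1 with h0 | hpos
    · -- tinf = 0, so y = 0
      have hnorm0 : Tendsto (fun n => ‖k (φ n)‖) atTop (𝓝 0) := by
        apply squeeze_zero (fun n => norm_nonneg _)
          (g := fun n => t (φ n) * (‖x - z‖ + ρ))
        · intro n
          rw [hkweq (φ n), norm_smul, Real.norm_eq_abs, abs_of_nonneg (ht (φ n))]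
          exact mul_le_mul_of_nonneg_left (hCnormhigh _ (hwC (φ n))) (ht (φ n))
        · have : Tendsto (fun n => t (φ n) * (‖x - z‖ + ρ)) atTop
              (𝓝 (tinf * (‖x - z‖ + ρ))) := hφlim.mul_const _
          rwa [← h0, zero_mul] at this
      have hnormy : Tendsto (fun n => ‖k (φ n)‖) atTop (𝓝 ‖y‖) :=
        ((hlim.comp hφ.tendsto_atTop).norm)
      have : ‖y‖ = 0 := tendsto_nhds_unique hnormy hnorm0
      have hy0 : y = 0 := norm_eq_zero.mp this
      refine ⟨0, le_refl 0, x - z, Metric.mem_closedBall_self hρpos.le, ?_⟩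
      rw [hy0, zero_smul]
    · -- tinf > 0
      have htinfne : tinf ≠ 0 := ne_of_gt hpos
      have hglim : Tendsto (fun n => (t (φ n))⁻¹ • k (φ n)) atTop (𝓝 (tinf⁻¹ • y)) :=
        (hφlim.inv₀ htinfne).smul (hlim.comp hφ.tendsto_atTop)
      have hevent : ∀ᶠ n in atTop, (t (φ n))⁻¹ • k (φ n) ∈ C := by
        filter_upwards [hφlim.eventually_ne htinfne] with n hn
        have hn' : t (φ n) ≠ 0 := hn
        have heq2 : (t (φ n))⁻¹ • k (φ n) = w (φ n) := by
          rw [hkweq (φ n)]; exact inv_smul_smul₀ hn' _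
        rw [heq2]
        exact hwC (φ n)
      have hmemC : tinf⁻¹ • y ∈ C :=
        Metric.isClosed_closedBall.mem_of_tendsto hglim hevent
      exact ⟨tinf, hpos.le, tinf⁻¹ • y, hmemC, (smul_inv_smul₀ htinfne y).symm⟩
  · -- K convex
    rintro k₁ ⟨t₁, ht₁, w₁, hw₁, rfl⟩ k₂ ⟨t₂, ht₂, w₂, hw₂, rfl⟩ a b ha hb hab
    by_cases hs : a * t₁ + b * t₂ = 0
    · have hat : a * t₁ = 0 := by nlinarith [mul_nonneg ha ht₁, mul_nonneg hb ht₂]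
      have hbt : b * t₂ = 0 := by nlinarith [mul_nonneg ha ht₁, mul_nonneg hb ht₂]
      refine ⟨0, le_refl 0, w₁, hw₁, ?_⟩
      rw [zero_smul, smul_smul, smul_smul, hat, hbt, zero_smul, zero_smul, add_zero]
    · have hspos : 0 < a * t₁ + b * t₂ :=
        lt_of_le_of_ne (by positivity) (Ne.symm hs)
      refine ⟨a * t₁ + b * t₂, hspos.le,
        (a * t₁ / (a * t₁ + b * t₂)) • w₁ + (b * t₂ / (a * t₁ + b * t₂)) • w₂, ?_, ?_⟩
      · refine (convex_closedBall _ _) hw₁ hw₂ (by positivity) (by positivity) ?_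
        field_simp
      · rw [smul_add, smul_smul, smul_smul, smul_smul, smul_smul]
        rw [mul_div_cancel₀ _ hs, mul_div_cancel₀ _ hs]
  · -- K cone
    rintro a ha k ⟨t, ht, w, hw, rfl⟩
    exact ⟨a * t, mul_nonneg ha ht, w, hw, by rw [smul_smul]⟩
  · -- interior K nonempty
    refine ⟨x - z, mem_interior.mpr ⟨Metric.ball (x - z) ρ, ?_,
      Metric.isOpen_ball, Metric.mem_ball_self hρpos⟩⟩
    intro w hw
    exact ⟨1, zero_le_one, w, Metric.ball_subset_closedBall hw, (one_smul ℝ w).symm⟩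
  · -- K-nondecreasing on U
    intro u hu k hk hk0 _
    obtain ⟨t, ht0, w, hw, rfl⟩ := hk
    have htpos : 0 < t := by
      rcases ht0.lt_or_eq with h | h
      · exact h
      · exfalso; apply hk0; rw [← h, zero_smul]
    have h1t : (0 : ℝ) < 1 + t := by linarith
    set l : ℝ := 1 / (1 + t) with hldef
    have hl0 : 0 ≤ l := by positivity
    have hl1 : l ≤ 1 := by
      rw [hldef, div_le_one h1t]; linarith
    have hv : u - w ∈ Metric.ball z ρ2 := by
      rw [Metric.mem_ball, dist_eq_norm]
      have heq : u - w - z = (u - x) - (w - (x - z)) := by abel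
      have h1 : ‖u - w - z‖ ≤ ‖u - x‖ + ‖w - (x - z)‖ := by
        rw [heq]; exact norm_sub_le _ _
      have h2 : ‖u - x‖ < r := by
        rw [hUdef, Metric.mem_ball, dist_eq_norm] at hu; exact hu
      have h3 := hCmem w hw
      have : ‖u - w - z‖ < r + ρ := by linarith
      linarith [hρdef.le, hρdef.ge]
    have hlt : l * t - (1 - l) = 0 := by
      rw [hldef]; field_simp; ring
    have key : l • (u + t • w) + (1 - l) • (u - w) = u := by
      have hexp : l • (u + t • w) + (1 - l) • (u - w)
          = (l + (1 - l)) • u + (l * t - (1 - l)) • w := by module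
      rw [hexp, hlt, zero_smul, add_zero]
      have : l + (1 - l) = 1 := by ring
      rw [this, one_smul]
    have hmax := hq (u + t • w) (u - w) l ⟨hl0, hl1⟩
    rw [key] at hmax
    have hfv : f (u - w) < γ := hρ2 hv
    have hfu : γ < f u := hr0 (Metric.ball_subset_ball hr_r0 hu)
    rcases le_max_iff.mp hmax with h | h
    · exact h
    · linarith
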